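/- For all z, w ∈ ℍ with |w| ≥ 2|z|, one has 0 ≤ log(|z − w̄| / |z − w|) ≤ 4 · |z| / |w|, where w̄ denotes the complex conjugate of w. -/

import Mathlib

open ComplexConjugate

/-- Estimate (4.27) in the proof of Lemma 4.6 (with explicit constant 4): for `z, w ∈ ℍ`
with `|w| ≥ 2|z|`, the Green's function `G(ℍ; z, w) = log(|z − w̄|/|z − w|)`
satisfies `0 ≤ G(ℍ; z, w) ≤ 4 |z| / |w|`. -/
theorem green_bound_large_modulus (z w : ℂ) (hz : 0 < z.im) (hw : 0 < w.im)
    (h : 2 * ‖z‖ ≤ ‖w‖) :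
    0 ≤ Real.log (‖z - conj w‖ / ‖z - w‖) ∧
      Real.log (‖z - conj w‖ / ‖z - w‖) ≤
        4 * ‖z‖ / ‖w‖ := by
  set a := ‖z‖ with ha
  set b := ‖w‖ with hb
  have hz0 : z ≠ 0 := fun h0 => by simp [h0] at hz
  have ha0 : 0 < a := norm_pos_iff.mpr hz0
  have hb0 : 0 < b := by linarith
  have hab : a < b := by linarith
  -- |w| - |z| ≤ |z - w|
  have h1 : b - a ≤ ‖z - w‖ := by
    have h1' : ‖w‖ - ‖z‖ ≤ ‖w - z‖ :=
      le_trans (le_abs_self _) (abs_norm_sub_norm_le w z)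
    rwa [show ‖w - z‖ = ‖z - w‖ from norm_sub_rev w z] at h1'
  have hzw : 0 < ‖z - w‖ := lt_of_lt_of_le (by linarith) h1
  -- |z - conj w| ≤ a + b
  have h2 : ‖z - conj w‖ ≤ a + b := by
    calc ‖z - conj w‖ ≤ ‖z‖ + ‖conj w‖ :=
          norm_sub_le z (conj w)
      _ = a + b := by rw [Complex.norm_conj]
  -- |z - w| ≤ |z - conj w|
  have hle : ‖z - w‖ ≤ ‖z - conj w‖ := by
    have hsq : Complex.normSq (z - w) ≤ Complex.normSq (z - conj w) := by
      simp only [Complex.normSq_apply, Complex.sub_re, Complex.sub_im, Complex.conj_re,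
        Complex.conj_im]
      nlinarith [mul_pos hz hw]
    rw [Complex.norm_def, Complex.norm_def]
    exact Real.sqrt_le_sqrt hsq
  have hratio1 : (1 : ℝ) ≤ ‖z - conj w‖ / ‖z - w‖ :=
    (one_le_div hzw).mpr hle
  constructor
  · exact Real.log_nonneg hratio1
  · have hr : ‖z - conj w‖ / ‖z - w‖ ≤ (a + b) / (b - a) :=
      div_le_div₀ (by positivity) h2 (by linarith) h1
    have hfin : (a + b) / (b - a) - 1 ≤ 4 * a / b := by
      rw [div_sub_one (by linarith : b - a ≠ 0), div_le_div_iff₀ (by linarith) hb0]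
      nlinarith
    calc Real.log (‖z - conj w‖ / ‖z - w‖)
        ≤ ‖z - conj w‖ / ‖z - w‖ - 1 :=
          Real.log_le_sub_one_of_pos (by linarith)
      _ ≤ (a + b) / (b - a) - 1 := by linarith
      _ ≤ 4 * a / b := hfin
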